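/- Let K be a linear subspace of L^1(Ω, F, P) and f ∈ L^∞(Ω, F, P). If sup{E[w f] : w ∈ K, ‖w⁻‖_1 ≤ 1} < ∞, then there exists g ∈ L^∞(Ω, F, P) with g ≥ f a.s. and E[w g] = 0 for all w ∈ K. -/

import Mathlib

open MeasureTheory RealInnerProductSpace ENNReal

set_option maxHeartbeats 2000000 in
theorem stmt_1 {Ω : Type*} [MeasurableSpace Ω] (P : Measure Ω) [IsProbabilityMeasure P]
    (K : Set (Ω → ℝ))
    (hK0 : (0 : Ω → ℝ) ∈ K)
    (hKadd : ∀ u v : Ω → ℝ, u ∈ K → v ∈ K → u + v ∈ K)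
    (hKsmul : ∀ (c : ℝ) (u : Ω → ℝ), u ∈ K → c • u ∈ K)
    (hKint : ∀ u ∈ K, Integrable u P)
    (f : Ω → ℝ) (hf : Measurable f) (hfb : ∃ C : ℝ, ∀ᵐ ω ∂P, |f ω| ≤ C)
    (M : ℝ)
    (hM : ∀ w ∈ K, (∫ ω, max (-(w ω)) 0 ∂P) ≤ 1 → (∫ ω, w ω * f ω ∂P) ≤ M) :
    ∃ g : Ω → ℝ, Measurable g ∧ (∃ C : ℝ, ∀ᵐ ω ∂P, |g ω| ≤ C) ∧
      (∀ᵐ ω ∂P, f ω ≤ g ω) ∧ ∀ w ∈ K, (∫ ω, w ω * g ω ∂P) = 0 := by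
  classical
  obtain ⟨Cf, hCf⟩ := hfb
  have hfae : AEStronglyMeasurable f P := hf.aestronglyMeasurable
  -- integrability of products with f
  have hCf' : ∀ᵐ ω ∂P, ‖f ω‖ ≤ Cf := by simpa [Real.norm_eq_abs] using hCf
  have hintf : ∀ (u : Ω → ℝ), Integrable u P → Integrable (fun ω => u ω * f ω) P := by
    intro u hu
    exact (hu.bdd_mul hfae hCf').congr
      (Filter.Eventually.of_forall fun ω => mul_comm _ _)
  -- M is nonneg
  have hM0 : 0 ≤ M := by
    have h := hM 0 hK0 (by simp)
    simpa using h
  -- the key scaling bound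
  have hKey : ∀ w ∈ K, (∫ ω, w ω * f ω ∂P) ≤ M * ∫ ω, max (-(w ω)) 0 ∂P := by
    intro w hw
    set a := ∫ ω, max (-(w ω)) 0 ∂P with ha
    have ha0 : 0 ≤ a := integral_nonneg fun ω => le_max_right _ _
    rcases eq_or_lt_of_le ha0 with h0 | hpos
    · -- a = 0 case : ∫ w f ≤ 0
      have hle0 : (∫ ω, w ω * f ω ∂P) ≤ 0 := by
        by_contra hcon
        push_neg at hcon
        set I := ∫ ω, w ω * f ω ∂P with hI
        have ht : (0:ℝ) < (M + 1) / I := by positivity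
        have hmem := hKsmul ((M + 1) / I) w hw
        have hint_eq : (∫ ω, max (-((((M+1)/I) • w) ω)) 0 ∂P) = ((M+1)/I) * a := by
          rw [ha, ← integral_const_mul]
          congr 1 with ω
          simp only [Pi.smul_apply, smul_eq_mul]
          rw [mul_max_of_nonneg _ _ ht.le, mul_zero, neg_mul_eq_mul_neg]
        have h1 : (∫ ω, max (-((((M+1)/I) • w) ω)) 0 ∂P) ≤ 1 := by
          rw [hint_eq, ← h0, mul_zero]; norm_num
        have h2 := hM _ hmem h1
        have h3 : (∫ ω, (((M+1)/I) • w) ω * f ω ∂P) = ((M+1)/I) * I := by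
          rw [hI, ← integral_const_mul]
          congr 1 with ω
          simp only [Pi.smul_apply, smul_eq_mul, mul_assoc]
        rw [h3, div_mul_cancel₀ _ (ne_of_gt hcon)] at h2
        linarith
      rw [← h0, mul_zero]
      exact hle0
    · have hmem := hKsmul a⁻¹ w hw
      have hint_eq : (∫ ω, max (-((a⁻¹ • w) ω)) 0 ∂P) = a⁻¹ * a := by
        conv_rhs => rw [ha]
        rw [← integral_const_mul]
        congr 1 with ω
        simp only [Pi.smul_apply, smul_eq_mul]
        rw [mul_max_of_nonneg _ _ (inv_nonneg.2 ha0), mul_zero, neg_mul_eq_mul_neg]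
      have h1 : (∫ ω, max (-((a⁻¹ • w) ω)) 0 ∂P) ≤ 1 := by
        rw [hint_eq, inv_mul_cancel₀ (ne_of_gt hpos)]
      have h2 := hM _ hmem h1
      have h3 : (∫ ω, (a⁻¹ • w) ω * f ω ∂P) = a⁻¹ * ∫ ω, w ω * f ω ∂P := by
        rw [← integral_const_mul]
        congr 1 with ω
        simp only [Pi.smul_apply, smul_eq_mul, mul_assoc]
      rw [h3] at h2
      have := (inv_mul_le_iff₀ hpos).mp h2
      linarith [this]
  -- the submodule of L¹ corresponding to K
  set Ksub : Submodule ℝ (Lp ℝ 1 P) :=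
    { carrier := {x | ∃ w ∈ K, w =ᵐ[P] ⇑x}
      zero_mem' := ⟨0, hK0, by
        filter_upwards [Lp.coeFn_zero ℝ 1 P] with ω h
        simp [h]⟩
      add_mem' := by
        rintro x y ⟨u, hu, hux⟩ ⟨v, hv, hvy⟩
        exact ⟨u + v, hKadd u v hu hv, (hux.add hvy).trans (Lp.coeFn_add x y).symm⟩
      smul_mem' := by
        rintro c x ⟨u, hu, hux⟩
        exact ⟨c • u, hKsmul c u hu,
          (hux.const_smul c).trans (Lp.coeFn_smul c x).symm⟩ } with hKsub
  -- the linear functional on Ksub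
  have hint1 : ∀ x : Lp ℝ 1 P, Integrable (fun ω => x ω * f ω) P :=
    fun x => hintf _ (L1.integrable_coeFn x)
  set φ : Ksub →ₗ[ℝ] ℝ :=
    { toFun := fun x => ∫ ω, (x : Lp ℝ 1 P) ω * f ω ∂P
      map_add' := by
        rintro ⟨x, hx⟩ ⟨y, hy⟩
        have h1 : (fun ω => (⇑(x + y) : Ω → ℝ) ω * f ω) =ᵐ[P]
            (fun ω => x ω * f ω + y ω * f ω) := by
          filter_upwards [Lp.coeFn_add x y] with ω h
          simp only [h, Pi.add_apply, add_mul]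
        simp only [Submodule.coe_add]
        rw [integral_congr_ae h1, integral_add (hint1 x) (hint1 y)]
      map_smul' := by
        rintro c ⟨x, hx⟩
        have h1 : (fun ω => (⇑(c • x) : Ω → ℝ) ω * f ω) =ᵐ[P]
            (fun ω => c * (x ω * f ω)) := by
          filter_upwards [Lp.coeFn_smul c x] with ω h
          simp only [h, Pi.smul_apply, smul_eq_mul, mul_assoc]
        simp only [SetLike.val_smul]
        rw [integral_congr_ae h1, integral_const_mul]
        simp } with hφ
  -- the sublinear functional N
  set N : Lp ℝ 1 P → ℝ := fun x => M * ∫ ω, max (-(x ω)) 0 ∂P with hN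
  have hnp : ∀ x : Lp ℝ 1 P, Integrable (fun ω => max (-(x ω)) 0) P := by
    intro x
    simpa using (L1.integrable_coeFn x).neg.pos_part
  have hN_hom : ∀ c : ℝ, 0 < c → ∀ x : Lp ℝ 1 P, N (c • x) = c * N x := by
    intro c hc x
    have h1 : (fun ω => max (-((c • x : Lp ℝ 1 P) ω)) 0) =ᵐ[P]
        (fun ω => c * max (-(x ω)) 0) := by
      filter_upwards [Lp.coeFn_smul c x] with ω h
      simp only [h, Pi.smul_apply, smul_eq_mul]
      rw [mul_max_of_nonneg _ _ hc.le, mul_zero, neg_mul_eq_mul_neg]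
    rw [hN]
    simp only
    rw [integral_congr_ae h1, integral_const_mul]
    ring
  have hN_add : ∀ x y : Lp ℝ 1 P, N (x + y) ≤ N x + N y := by
    intro x y
    rw [hN]
    simp only
    rw [← mul_add, ← integral_add (hnp x) (hnp y)]
    refine mul_le_mul_of_nonneg_left ?_ hM0
    refine integral_mono_ae (by simpa using (hnp (x + y))) ((hnp x).add (hnp y)) ?_
    filter_upwards [Lp.coeFn_add x y] with ω h
    simp only [h, Pi.add_apply]
    refine max_le ?_ (by positivity)
    calc -(x ω + y ω) = -(x ω) + -(y ω) := by ring
    _ ≤ max (-(x ω)) 0 + max (-(y ω)) 0 := add_le_add (le_max_left _ _) (le_max_left _ _)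
  have hφle : ∀ x : (LinearPMap.mk Ksub φ : Lp ℝ 1 P →ₗ.[ℝ] ℝ).domain,
      (LinearPMap.mk Ksub φ : Lp ℝ 1 P →ₗ.[ℝ] ℝ) x ≤ N x := by
    rintro ⟨x, w, hw, hwx⟩
    have h1 : (∫ ω, (x : Lp ℝ 1 P) ω * f ω ∂P) = ∫ ω, w ω * f ω ∂P := by
      refine integral_congr_ae ?_
      filter_upwards [hwx] with ω h
      rw [h]
    have h2 : (∫ ω, max (-(w ω)) 0 ∂P) = ∫ ω, max (-((x : Lp ℝ 1 P) ω)) 0 ∂P := by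
      refine integral_congr_ae ?_
      filter_upwards [hwx] with ω h
      rw [h]
    show (∫ ω, (x : Lp ℝ 1 P) ω * f ω ∂P) ≤ N x
    rw [h1, hN]
    simpa [h2] using hKey w hw
  obtain ⟨ψ, hψeq, hψle⟩ :=
    exists_extension_of_le_sublinear (LinearPMap.mk Ksub φ) N hN_hom hN_add hφle
  -- ψ is bounded
  have hnegle : ∀ x : Lp ℝ 1 P, (∫ ω, max (-(x ω)) 0 ∂P) ≤ ‖x‖ := by
    intro x
    rw [L1.norm_eq_integral_norm]
    refine integral_mono (hnp x) (L1.integrable_coeFn x).norm ?_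
    intro ω
    exact max_le (neg_le_abs _) (abs_nonneg _)
  have hψb : ∀ x : Lp ℝ 1 P, ‖ψ x‖ ≤ M * ‖x‖ := by
    intro x
    have hpos : ψ x ≤ M * ‖x‖ :=
      (hψle x).trans (mul_le_mul_of_nonneg_left (hnegle x) hM0)
    have hneg : ψ (-x) ≤ M * ‖x‖ := by
      have h1 : N (-x) ≤ M * ‖-x‖ := mul_le_mul_of_nonneg_left (hnegle (-x)) hM0
      rw [norm_neg] at h1
      exact (hψle (-x)).trans h1
    rw [map_neg] at hneg
    rw [Real.norm_eq_abs, abs_le]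
    exact ⟨by linarith, hpos⟩
  set ψc : Lp ℝ 1 P →L[ℝ] ℝ := LinearMap.mkContinuous ψ M hψb with hψc
  have hψc_apply : ∀ x, ψc x = ψ x := fun x => rfl
  -- the inclusion L² → L¹
  have h12 : (1 : ℝ≥0∞) ≤ 2 := by norm_num
  set ι : Lp ℝ 2 P → Lp ℝ 1 P :=
    fun y => ((Lp.memLp y).mono_exponent h12).toLp _ with hι
  have hι_coe : ∀ y : Lp ℝ 2 P, ⇑(ι y) =ᵐ[P] ⇑y :=
    fun y => MemLp.coeFn_toLp _
  have hι_norm : ∀ y : Lp ℝ 2 P, ‖ι y‖ ≤ ‖y‖ := by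
    intro y
    have he : ‖ι y‖ = (eLpNorm (⇑y) 1 P).toReal := by
      rw [hι]; exact Lp.norm_toLp _ _
    rw [he, Lp.norm_def]
    exact ENNReal.toReal_mono (Lp.eLpNorm_ne_top y)
      (eLpNorm_le_eLpNorm_of_exponent_le h12 (Lp.aestronglyMeasurable y))
  have hι_add : ∀ y z : Lp ℝ 2 P, ι (y + z) = ι y + ι z := by
    intro y z
    refine Lp.ext (((hι_coe (y + z)).trans (Lp.coeFn_add y z)).trans ?_)
    exact (((hι_coe y).add (hι_coe z)).symm).trans (Lp.coeFn_add (ι y) (ι z)).symm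
  have hι_smul : ∀ (c : ℝ) (y : Lp ℝ 2 P), ι (c • y) = c • ι y := by
    intro c y
    refine Lp.ext (((hι_coe (c • y)).trans (Lp.coeFn_smul c y)).trans ?_)
    exact (((hι_coe y).const_smul c).symm).trans (Lp.coeFn_smul c (ι y)).symm
  set ℓ : Lp ℝ 2 P →ₗ[ℝ] ℝ :=
    { toFun := fun y => ψc (ι y)
      map_add' := by
        intro y z
        show ψc (ι (y + z)) = ψc (ι y) + ψc (ι z)
        rw [hι_add, map_add]
      map_smul' := by
        intro c y
        show ψc (ι (c • y)) = c • ψc (ι y)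
        rw [hι_smul, _root_.map_smul] } with hℓ
  have hℓb : ∀ y : Lp ℝ 2 P, ‖ℓ y‖ ≤ M * ‖y‖ := by
    intro y
    calc ‖ℓ y‖ = ‖ψc (ι y)‖ := rfl
    _ ≤ M * ‖ι y‖ := hψb _
    _ ≤ M * ‖y‖ := mul_le_mul_of_nonneg_left (hι_norm y) hM0
  set ψ₂ : Lp ℝ 2 P →L[ℝ] ℝ := LinearMap.mkContinuous ℓ M hℓb with hψ₂
  -- Riesz representation in L²
  set h : Lp ℝ 2 P := (InnerProductSpace.toDual ℝ (Lp ℝ 2 P)).symm ψ₂ with hh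
  have hrieszh : ∀ y : Lp ℝ 2 P, (∫ ω, h ω * y ω ∂P) = ψc (ι y) := by
    intro y
    have h1 : ⟪h, y⟫ = ψ₂ y := InnerProductSpace.toDual_symm_apply
    have h2 : ⟪h, y⟫ = ∫ ω, ⟪h ω, y ω⟫ ∂P := L2.inner_def h y
    have h3 : (∫ ω, ⟪h ω, y ω⟫ ∂P) = ∫ ω, h ω * y ω ∂P := by
      congr 1
      funext ω
      simp [mul_comm]
    rw [← h3, ← h2, h1]
    rfl
  -- measurable representative of h
  set h0 : Ω → ℝ := (Lp.aestronglyMeasurable h).mk _ with hh0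
  have hh0m : Measurable h0 := (Lp.aestronglyMeasurable h).stronglyMeasurable_mk.measurable
  have hh0ae : ⇑h =ᵐ[P] h0 := (Lp.aestronglyMeasurable h).ae_eq_mk
  have hh0int : Integrable h0 P := by
    refine Integrable.congr ?_ hh0ae
    exact (memLp_one_iff_integrable.mp ((Lp.memLp h).mono_exponent h12))
  -- set-integral identities
  have hsetInt : ∀ (A : Set Ω) (hA : MeasurableSet A),
      (∫ ω in A, h0 ω ∂P) = ψc (indicatorConstLp 1 hA (measure_ne_top P A) (1:ℝ)) := by
    intro A hA
    have hx : ι (indicatorConstLp 2 hA (measure_ne_top P A) (1:ℝ))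
        = indicatorConstLp 1 hA (measure_ne_top P A) (1:ℝ) :=
      Lp.ext ((hι_coe _).trans (indicatorConstLp_coeFn.trans indicatorConstLp_coeFn.symm))
    have h1 := hrieszh (indicatorConstLp 2 hA (measure_ne_top P A) (1:ℝ))
    rw [hx] at h1
    rw [← h1]
    calc (∫ ω in A, h0 ω ∂P) = ∫ ω, A.indicator h0 ω ∂P := (integral_indicator hA).symm
    _ = ∫ ω, h ω * (indicatorConstLp 2 hA (measure_ne_top P A) (1:ℝ)) ω ∂P := by
        refine integral_congr_ae ?_
        filter_upwards [hh0ae, indicatorConstLp_coeFn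
          (p := 2) (hs := hA) (hμs := measure_ne_top P A) (c := (1:ℝ))] with ω ha hb
        rw [hb]
        by_cases hω : ω ∈ A
        · simp [Set.indicator_of_mem hω, ha]
        · simp [Set.indicator_of_notMem hω]
  -- set integral bounds for h0
  have hb_le : ∀ (A : Set Ω), MeasurableSet A → (∫ ω in A, h0 ω ∂P) ≤ 0 := by
    intro A hA
    rw [hsetInt A hA]
    refine (hψle _).trans ?_
    rw [hN]
    have hz : (∫ ω, max (-((indicatorConstLp 1 hA (measure_ne_top P A) (1:ℝ)) ω)) 0 ∂P)
        = 0 := by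
      refine integral_eq_zero_of_ae ?_
      filter_upwards [indicatorConstLp_coeFn
        (p := 1) (hs := hA) (hμs := measure_ne_top P A) (c := (1:ℝ))] with ω hb
      rw [hb]
      by_cases hω : ω ∈ A
      · simp [Set.indicator_of_mem hω]
      · simp [Set.indicator_of_notMem hω]
    simp only
    rw [hz, mul_zero]
  have hb_ge : ∀ (A : Set Ω), MeasurableSet A →
      -(M * (P A).toReal) ≤ ∫ ω in A, h0 ω ∂P := by
    intro A hA
    rw [hsetInt A hA]
    have h2 : ψc (-(indicatorConstLp 1 hA (measure_ne_top P A) (1:ℝ)))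
        ≤ N (-(indicatorConstLp 1 hA (measure_ne_top P A) (1:ℝ))) := hψle _
    have h3 : N (-(indicatorConstLp 1 hA (measure_ne_top P A) (1:ℝ)))
        = M * (P A).toReal := by
      rw [hN]
      simp only
      have he : (fun ω => max (-((-(indicatorConstLp 1 hA (measure_ne_top P A) (1:ℝ))
          : Lp ℝ 1 P) ω)) 0) =ᵐ[P] A.indicator (fun _ => (1:ℝ)) := by
        filter_upwards [Lp.coeFn_neg (indicatorConstLp 1 hA (measure_ne_top P A) (1:ℝ)),
          indicatorConstLp_coeFn
            (p := 1) (hs := hA) (hμs := measure_ne_top P A) (c := (1:ℝ))] with ω hn hi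
        rw [hn]
        simp only [Pi.neg_apply, neg_neg, hi]
        by_cases hω : ω ∈ A
        · simp [Set.indicator_of_mem hω]
        · simp [Set.indicator_of_notMem hω]
      rw [integral_congr_ae he, integral_indicator hA, setIntegral_const]
      simp [mul_comm, measureReal_def]
    rw [map_neg] at h2
    rw [h3] at h2
    linarith
  -- a.e. bounds on h0
  have hb1 : ∀ᵐ ω ∂P, h0 ω ≤ 0 := by
    have hnn : 0 ≤ᵐ[P] fun ω => -(h0 ω) := by
      refine ae_nonneg_of_forall_setIntegral_nonneg hh0int.neg ?_
      intro s hs _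
      rw [integral_neg]
      linarith [hb_le s hs]
    filter_upwards [hnn] with ω hω
    simpa using hω
  have hb2 : ∀ᵐ ω ∂P, -M ≤ h0 ω := by
    have hnn : 0 ≤ᵐ[P] fun ω => h0 ω + M := by
      refine ae_nonneg_of_forall_setIntegral_nonneg (hh0int.add (integrable_const M)) ?_
      intro s hs _
      rw [integral_add hh0int.integrableOn (integrable_const M).integrableOn,
        setIntegral_const]
      have := hb_ge s hs
      have hps : (P.real s : ℝ) • M = (P s).toReal * M := by simp [smul_eq_mul, measureReal_def]
      rw [hps]
      nlinarith [this]
    filter_upwards [hnn] with ω hω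
    simp only [Pi.zero_apply] at hω
    linarith
  have habs : ∀ᵐ ω ∂P, |h0 ω| ≤ M := by
    filter_upwards [hb1, hb2] with ω a b
    rw [abs_le]
    exact ⟨b, by linarith⟩
  -- products with h0 are integrable
  have habs' : ∀ᵐ ω ∂P, ‖h0 ω‖ ≤ M := by simpa [Real.norm_eq_abs] using habs
  have hinth0 : ∀ (u : Ω → ℝ), Integrable u P → Integrable (fun ω => u ω * h0 ω) P := by
    intro u hu
    exact (hu.bdd_mul hh0m.aestronglyMeasurable habs').congr
      (Filter.Eventually.of_forall fun ω => mul_comm _ _)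
  have hintH : ∀ x : Lp ℝ 1 P, Integrable (fun ω => x ω * h0 ω) P :=
    fun x => hinth0 _ (L1.integrable_coeFn x)
  -- the continuous linear functional given by h0
  set Θlin : Lp ℝ 1 P →ₗ[ℝ] ℝ :=
    { toFun := fun x => ∫ ω, (x : Lp ℝ 1 P) ω * h0 ω ∂P
      map_add' := by
        intro x y
        have h1 : (fun ω => (⇑(x + y) : Ω → ℝ) ω * h0 ω) =ᵐ[P]
            (fun ω => x ω * h0 ω + y ω * h0 ω) := by
          filter_upwards [Lp.coeFn_add x y] with ω h
          simp only [h, Pi.add_apply, add_mul]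
        rw [integral_congr_ae h1, integral_add (hintH x) (hintH y)]
      map_smul' := by
        intro c x
        have h1 : (fun ω => (⇑(c • x) : Ω → ℝ) ω * h0 ω) =ᵐ[P]
            (fun ω => c * (x ω * h0 ω)) := by
          filter_upwards [Lp.coeFn_smul c x] with ω h
          simp only [h, Pi.smul_apply, smul_eq_mul, mul_assoc]
        rw [integral_congr_ae h1, integral_const_mul]
        simp } with hΘlin
  have hΘb : ∀ x : Lp ℝ 1 P, ‖Θlin x‖ ≤ M * ‖x‖ := by
    intro x
    have h1 : ‖Θlin x‖ ≤ ∫ ω, ‖x ω * h0 ω‖ ∂P := norm_integral_le_integral_norm _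
    have h2 : (∫ ω, ‖x ω * h0 ω‖ ∂P) ≤ ∫ ω, M * ‖x ω‖ ∂P := by
      refine integral_mono_ae (hintH x).norm
        (((L1.integrable_coeFn x).norm).const_mul M) ?_
      filter_upwards [habs'] with ω hω
      rw [norm_mul]
      calc ‖x ω‖ * ‖h0 ω‖ ≤ ‖x ω‖ * M :=
        mul_le_mul_of_nonneg_left hω (norm_nonneg _)
      _ = M * ‖x ω‖ := mul_comm _ _
    have h3 : (∫ ω, M * ‖x ω‖ ∂P) = M * ‖x‖ := by
      rw [integral_const_mul, ← L1.norm_eq_integral_norm]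
    linarith
  set Θ : Lp ℝ 1 P →L[ℝ] ℝ := Θlin.mkContinuous M hΘb with hΘ
  -- ψc and Θ agree everywhere, by density of simple functions
  have hrep : ∀ x : Lp ℝ 1 P, ψc x = Θ x := by
    have hdense := Lp.simpleFunc.denseRange (E := ℝ) (p := 1) (μ := P) one_ne_top
    have heq : (⇑ψc : Lp ℝ 1 P → ℝ) = ⇑Θ := by
      refine hdense.equalizer ψc.continuous Θ.continuous ?_
      funext s
      obtain ⟨Cs, hCs⟩ := (Lp.simpleFunc.toSimpleFunc s).exists_forall_norm_le
      have hs2 : MemLp (⇑(Lp.simpleFunc.toSimpleFunc s)) 2 P :=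
        (memLp_top_of_bound
          (Lp.simpleFunc.toSimpleFunc s).stronglyMeasurable.aestronglyMeasurable Cs
          (Filter.Eventually.of_forall hCs)).mono_exponent le_top
      have hycoe : ⇑(hs2.toLp _) =ᵐ[P] ⇑(Lp.simpleFunc.toSimpleFunc s) :=
        MemLp.coeFn_toLp _
      have hsimp : ⇑(Lp.simpleFunc.toSimpleFunc s) =ᵐ[P] ⇑(↑s : Lp ℝ 1 P) :=
        Lp.simpleFunc.toSimpleFunc_eq_toFun s
      have hιy : ι (hs2.toLp _) = (↑s : Lp ℝ 1 P) :=
        Lp.ext ((hι_coe _).trans (hycoe.trans hsimp))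
      show ψc ↑s = Θ ↑s
      calc ψc ↑s = ψc (ι (hs2.toLp _)) := by rw [hιy]
      _ = ∫ ω, h ω * (hs2.toLp _ : Lp ℝ 2 P) ω ∂P := (hrieszh _).symm
      _ = ∫ ω, (↑s : Lp ℝ 1 P) ω * h0 ω ∂P := by
          refine integral_congr_ae ?_
          filter_upwards [hh0ae, hycoe, hsimp] with ω a b c
          rw [a, b, c, mul_comm]
      _ = Θ ↑s := rfl
    intro x
    rw [heq]
  -- conclusion
  refine ⟨fun ω => f ω - h0 ω, hf.sub hh0m, ⟨Cf + M, ?_⟩, ?_, ?_⟩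
  · filter_upwards [hCf, hb1, hb2] with ω a b c
    rw [abs_le] at a ⊢
    obtain ⟨a1, a2⟩ := a
    constructor <;> linarith
  · filter_upwards [hb1] with ω hω
    linarith
  · intro w hw
    have hxw : ⇑((hKint w hw).toL1 w) =ᵐ[P] w := (hKint w hw).coeFn_toL1
    have hmem : (hKint w hw).toL1 w ∈ Ksub := ⟨w, hw, hxw.symm⟩
    have e1 : ψc ((hKint w hw).toL1 w) = ∫ ω, w ω * f ω ∂P := by
      have h1 : ψ ((hKint w hw).toL1 w)
          = ∫ ω, (⇑((hKint w hw).toL1 w) : Ω → ℝ) ω * f ω ∂P := hψeq ⟨_, hmem⟩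
      rw [hψc_apply, h1]
      refine integral_congr_ae ?_
      filter_upwards [hxw] with ω hω
      rw [hω]
    have e2 : ψc ((hKint w hw).toL1 w) = ∫ ω, w ω * h0 ω ∂P := by
      rw [hrep]
      have h1 : Θ ((hKint w hw).toL1 w)
          = ∫ ω, (⇑((hKint w hw).toL1 w) : Ω → ℝ) ω * h0 ω ∂P := rfl
      rw [h1]
      refine integral_congr_ae ?_
      filter_upwards [hxw] with ω hω
      rw [hω]
    have hsub : (∫ ω, w ω * (f ω - h0 ω) ∂P)
        = (∫ ω, w ω * f ω ∂P) - ∫ ω, w ω * h0 ω ∂P := by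
      rw [← integral_sub (hintf w (hKint w hw)) (hinth0 w (hKint w hw))]
      refine integral_congr_ae (Filter.Eventually.of_forall fun ω => ?_)
      ring
    show (∫ ω, w ω * (f ω - h0 ω) ∂P) = 0
    rw [hsub, ← e1, ← e2, sub_self]
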